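/- Let K be a field of characteristic zero, R = K[x,y,z], and let a, b, α, β be integers with 1 ≤ α ≤ a−1, 1 ≤ β ≤ b−1, α + 1 = b (so γ = 1, and in particular a ≥ b). Let I_β = (x^a, y^b − x^α z, z^3, x^{a−α} y^{b−β}, y^{b−β} z^2) and set k = ⌊(a+b−β)/2⌋. Then h_{R/I_β}(k) = 3b−3 if a = b and β = 1; h_{R/I_β}(k) = 3b−β if β ≤ a−b; h_{R/I_β}(k) = 3b−β−1 if β = a−b+1 ≥ 2; and h_{R/I_β}(k) = 2a+b−3β+2 if β ≥ a−b+2. -/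

import Mathlib

open MvPolynomial

/-- The degree-`i` graded component of `R/I`, i.e. the image in `R/I` of the
space of homogeneous polynomials of degree `i`. -/
noncomputable def grComponent (K : Type*) [Field K]
    (I : Ideal (MvPolynomial (Fin 3) K)) (i : ℕ) :
    Submodule K (MvPolynomial (Fin 3) K ⧸ I) :=
  (MvPolynomial.homogeneousSubmodule (Fin 3) K i).map
    (Ideal.Quotient.mkₐ K I).toLinearMap

/-- The Hilbert function of `R/I`. -/
noncomputable def hilb (K : Type*) [Field K]
    (I : Ideal (MvPolynomial (Fin 3) K)) (i : ℕ) : ℕ :=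
  Module.finrank K (grComponent K I i)

/-- `R/I` has the weak Lefschetz property: there is a linear form `L` such that
for every `i`, multiplication by `L` from `[R/I]_i` to `[R/I]_{i+1}` is
injective or surjective. -/
def hasWLP (K : Type*) [Field K] (I : Ideal (MvPolynomial (Fin 3) K)) : Prop :=
  ∃ L : MvPolynomial (Fin 3) K, L.IsHomogeneous 1 ∧
    ∀ i : ℕ,
      (∀ u ∈ grComponent K I i, ∀ v ∈ grComponent K I i,
          Ideal.Quotient.mk I L * u = Ideal.Quotient.mk I L * v → u = v) ∨
      (∀ w ∈ grComponent K I (i + 1), ∃ u ∈ grComponent K I i,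
          Ideal.Quotient.mk I L * u = w)

open Finset

set_option synthInstance.maxHeartbeats 1000000
set_option maxHeartbeats 1000000

namespace Stmt13

variable {K : Type*} [Field K]

def psi (b α : ℕ) : (Fin 3 →₀ ℕ) →+ ℤ × ℤ where
  toFun e := ((e 0 : ℤ) - α * e 2, (e 1 : ℤ) + b * e 2)
  map_zero' := by simp
  map_add' e f := by
    simp only [Finsupp.add_apply, Prod.mk_add_mk, Prod.mk.injEq]
    push_cast; constructor <;> ring

lemma psi_apply (b α : ℕ) (e : Fin 3 →₀ ℕ) :
    psi b α e = ((e 0 : ℤ) - α * e 2, (e 1 : ℤ) + b * e 2) := rfl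

def Dset (a b α β : ℕ) : Set (Fin 3 →₀ ℕ) :=
  {Finsupp.single 0 a, Finsupp.single 2 3,
   Finsupp.single 0 (a-α) + Finsupp.single 1 (b-β),
   Finsupp.single 1 (b-β) + Finsupp.single 2 2}

def Tset (a b α β : ℕ) : Set (ℤ × ℤ) :=
  {t | ∃ e : Fin 3 →₀ ℕ, ∃ d ∈ Dset a b α β, t = psi b α (e + d)}

lemma Tset_add (a b α β : ℕ) (e' : Fin 3 →₀ ℕ) {t : ℤ × ℤ} (ht : t ∈ Tset a b α β) :
    psi b α e' + t ∈ Tset a b α β := by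
  obtain ⟨e, d, hd, rfl⟩ := ht
  exact ⟨e' + e, d, hd, by rw [← map_add, add_assoc]⟩

noncomputable def phi (b α : ℕ) (K : Type*) [Field K] :
    MvPolynomial (Fin 3) K →+* AddMonoidAlgebra K (ℤ × ℤ) :=
  AddMonoidAlgebra.mapDomainRingHom K (psi b α)

lemma phi_monomial (b α : ℕ) (e : Fin 3 →₀ ℕ) (c : K) :
    phi b α K (monomial e c) = AddMonoidAlgebra.single (psi b α e) c := by
  show AddMonoidAlgebra.mapDomain _ _ = _
  rw [← MvPolynomial.single_eq_monomial]
  exact AddMonoidAlgebra.mapDomain_single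

noncomputable def Wmod (a b α β : ℕ) (K : Type*) [Field K] : Submodule K (AddMonoidAlgebra K (ℤ × ℤ)) :=
  Submodule.span K {w | ∃ t ∈ Tset a b α β, w = AddMonoidAlgebra.single t (1:K)}

lemma single_mem_Wmod (a b α β : ℕ) {t : ℤ × ℤ} (ht : t ∈ Tset a b α β) (c : K) :
    AddMonoidAlgebra.single t c ∈ Wmod a b α β K := by
  have : AddMonoidAlgebra.single t c = c • AddMonoidAlgebra.single t (1:K) := by
    rw [AddMonoidAlgebra.smul_single, smul_eq_mul, mul_one]
  rw [this]
  exact Submodule.smul_mem _ _ (Submodule.subset_span ⟨t, ht, rfl⟩)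

lemma mul_single_mem_Wmod (a b α β : ℕ) (r : MvPolynomial (Fin 3) K)
    {t : ℤ × ℤ} (ht : t ∈ Tset a b α β) (c : K) :
    phi b α K r * AddMonoidAlgebra.single t c ∈ Wmod a b α β K := by
  induction r using MvPolynomial.induction_on' with
  | monomial e c' =>
    rw [phi_monomial, AddMonoidAlgebra.single_mul_single]
    exact single_mem_Wmod a b α β (Tset_add a b α β e ht) _
  | add p q hp hq =>
    rw [map_add, add_mul]
    exact Submodule.add_mem _ hp hq

lemma mul_mem_Wmod (a b α β : ℕ) (r : MvPolynomial (Fin 3) K)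
    {w : AddMonoidAlgebra K (ℤ × ℤ)} (hw : w ∈ Wmod a b α β K) :
    phi b α K r * w ∈ Wmod a b α β K := by
  induction hw using Submodule.span_induction with
  | mem x hx =>
    obtain ⟨t, ht, rfl⟩ := hx
    exact mul_single_mem_Wmod a b α β r ht 1
  | zero => rw [mul_zero]; exact Submodule.zero_mem _
  | add x y _ _ hx hy => rw [mul_add]; exact Submodule.add_mem _ hx hy
  | smul c x _ hx => rw [mul_smul_comm]; exact Submodule.smul_mem _ _ hx

lemma coeff_eq_zero_of_mem_Wmod (a b α β : ℕ) {w : AddMonoidAlgebra K (ℤ × ℤ)}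
    (hw : w ∈ Wmod a b α β K) {t0 : ℤ × ℤ} (ht0 : t0 ∉ Tset a b α β) :
    w.coeff t0 = 0 := by
  induction hw using Submodule.span_induction with
  | mem x hx =>
    obtain ⟨t, ht, rfl⟩ := hx
    rw [AddMonoidAlgebra.coeff_single, Finsupp.single_apply, if_neg]
    rintro rfl; exact ht0 ht
  | zero => rfl
  | add x y _ _ hx hy => rw [AddMonoidAlgebra.coeff_add, Finsupp.add_apply, hx, hy, add_zero]
  | smul c x _ hx => rw [AddMonoidAlgebra.coeff_smul, Finsupp.smul_apply, hx, smul_zero]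


lemma monXXX (i j l : ℕ) :
    (monomial (Finsupp.single 0 i + Finsupp.single 1 j + Finsupp.single 2 l) (1:K) :
      MvPolynomial (Fin 3) K) = X 0 ^ i * X 1 ^ j * X 2 ^ l := by
  simp [X_pow_eq_monomial, monomial_mul]

lemma genX0 (a : ℕ) : (X 0 ^ a : MvPolynomial (Fin 3) K) = monomial (Finsupp.single 0 a) 1 :=
  X_pow_eq_monomial

lemma genX2 : (X 2 ^ 3 : MvPolynomial (Fin 3) K) = monomial (Finsupp.single 2 3) 1 :=
  X_pow_eq_monomial

lemma genX01 (u v : ℕ) : (X 0 ^ u * X 1 ^ v : MvPolynomial (Fin 3) K)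
    = monomial (Finsupp.single 0 u + Finsupp.single 1 v) 1 := by
  simp [X_pow_eq_monomial, monomial_mul]

lemma genX12 (v : ℕ) : (X 1 ^ v * X 2 ^ 2 : MvPolynomial (Fin 3) K)
    = monomial (Finsupp.single 1 v + Finsupp.single 2 2) 1 := by
  simp [X_pow_eq_monomial, monomial_mul]

lemma genBin (b α : ℕ) : (X 1 ^ b - X 0 ^ α * X 2 : MvPolynomial (Fin 3) K)
    = monomial (Finsupp.single 1 b) 1 -
      monomial (Finsupp.single 0 α + Finsupp.single 2 1) 1 := by
  have h2 : (X 2 : MvPolynomial (Fin 3) K) = monomial (Finsupp.single 2 1) 1 := rfl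
  rw [h2]
  simp [X_pow_eq_monomial, monomial_mul]



lemma psi_bin (b α : ℕ) : psi b α (Finsupp.single 1 b) =
    psi b α (Finsupp.single 0 α + Finsupp.single 2 1) := by
  simp [psi_apply, Finsupp.single_apply]

lemma phi_mem_Wmod (a b α β : ℕ) {f : MvPolynomial (Fin 3) K}
    (hf : f ∈ Ideal.span {(X 0 : MvPolynomial (Fin 3) K) ^ a, X 1 ^ b - X 0 ^ α * X 2, X 2 ^ 3,
        X 0 ^ (a - α) * X 1 ^ (b - β), X 1 ^ (b - β) * X 2 ^ 2}) :
    phi b α K f ∈ Wmod a b α β K := by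
  have hT : ∀ d ∈ Dset a b α β, psi b α d ∈ Tset a b α β := fun d hd =>
    ⟨0, d, hd, by rw [zero_add]⟩
  induction hf using Submodule.span_induction with
  | mem g hg =>
    simp only [Set.mem_insert_iff, Set.mem_singleton_iff] at hg
    rcases hg with rfl | rfl | rfl | rfl | rfl
    · rw [genX0, phi_monomial]
      exact single_mem_Wmod a b α β (hT _ (by left; rfl)) 1
    · rw [genBin, map_sub, phi_monomial, phi_monomial, psi_bin, sub_self]
      exact Submodule.zero_mem _
    · rw [genX2, phi_monomial]
      exact single_mem_Wmod a b α β (hT _ (by right; left; rfl)) 1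
    · rw [genX01, phi_monomial]
      exact single_mem_Wmod a b α β (hT _ (by right; right; left; rfl)) 1
    · rw [genX12, phi_monomial]
      exact single_mem_Wmod a b α β (hT _ (by right; right; right; rfl)) 1
  | zero => rw [map_zero]; exact Submodule.zero_mem _
  | add x y _ _ hx hy => rw [map_add]; exact Submodule.add_mem _ hx hy
  | smul r g _ hg =>
    rw [smul_eq_mul, map_mul]
    exact mul_mem_Wmod a b α β r hg


lemma zle {b j l Y L : ℤ} (hb : 0 ≤ b) (hj : j < b) (h0j : 0 ≤ j) (hY : 0 ≤ Y)
    (h : j + b * l = Y + b * L) : L ≤ l := by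
  by_contra hc
  push_neg at hc
  have h3 : l + 1 ≤ L := hc
  have h4 := mul_le_mul_of_nonneg_left h3 hb
  nlinarith

def Qc (a b α β k : ℕ) (j l : ℕ) : Prop :=
  j + l ≤ k ∧ k - j - l < a ∧ ¬(a - α ≤ k - j - l ∧ b - β ≤ j) ∧ ¬(b - β ≤ j ∧ 2 ≤ l)

instance (a b α β k j l : ℕ) : Decidable (Qc a b α β k j l) := by
  unfold Qc; infer_instance

def JLset (a b α β k : ℕ) : Finset (ℕ × ℕ) :=
  (range b ×ˢ range 3).filter (fun p => Qc a b α β k p.1 p.2)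

noncomputable def Ee (k : ℕ) (p : ℕ × ℕ) : Fin 3 →₀ ℕ :=
  Finsupp.single 0 (k - p.1 - p.2) + Finsupp.single 1 p.1 + Finsupp.single 2 p.2

lemma psi_Ee (b α k : ℕ) (p : ℕ × ℕ) :
    psi b α (Ee k p) = (((k - p.1 - p.2 : ℕ) : ℤ) - α * p.2, (p.1 : ℤ) + b * p.2) := by
  simp [psi_apply, Ee, Finsupp.add_apply, Finsupp.single_apply]

lemma mem_JLset_iff {a b α β k : ℕ} {p : ℕ × ℕ} :
    p ∈ JLset a b α β k ↔ p.1 < b ∧ p.2 < 3 ∧ Qc a b α β k p.1 p.2 := by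
  simp [JLset, Finset.mem_filter, Finset.mem_product, and_assoc]

lemma psi_Ee_not_mem_Tset {a b α β k : ℕ}
    (hα1 : 1 ≤ α) (hα2 : α ≤ a - 1) (hβ1 : 1 ≤ β) (hβ2 : β ≤ b - 1) (hαb : α + 1 = b)
    {p : ℕ × ℕ} (hp : p ∈ JLset a b α β k) :
    psi b α (Ee k p) ∉ Tset a b α β := by
  rw [mem_JLset_iff] at hp
  obtain ⟨hpb, hp3, hq1, hq2, hq3, hq4⟩ := hp
  have hb0 : (0:ℤ) ≤ b := by positivity
  have hjb : (p.1 : ℤ) < b := by exact_mod_cast hpb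
  have h0j : (0:ℤ) ≤ p.1 := by positivity
  rintro ⟨e, d, hd, heq⟩
  rw [psi_Ee, psi_apply] at heq
  rcases hd with rfl | rfl | rfl | rfl
  · simp only [Finsupp.add_apply, Finsupp.single_apply, Prod.mk.injEq] at heq
    norm_num at heq
    obtain ⟨h1, h2⟩ := heq
    have hl : (e 2 : ℤ) ≤ p.2 := zle hb0 hjb h0j (by positivity) h2
    have hlN : e 2 ≤ p.2 := by exact_mod_cast hl
    have hsp : p.2 = e 2 ∨ p.2 = e 2 + 1 ∨ p.2 = e 2 + 2 := by omega
    rcases hsp with hs | hs | hs <;> rw [hs] at h1 h2 <;> push_cast at h1 h2 <;>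
      ring_nf at h1 h2 <;> omega
  · simp only [Finsupp.add_apply, Finsupp.single_apply, Prod.mk.injEq] at heq
    norm_num at heq
    obtain ⟨h1, h2⟩ := heq
    have hl : (e 2 : ℤ) + 3 ≤ p.2 := zle hb0 hjb h0j (by positivity) h2
    have hlN : e 2 + 3 ≤ p.2 := by exact_mod_cast hl
    omega
  · simp only [Finsupp.add_apply, Finsupp.single_apply, Prod.mk.injEq] at heq
    norm_num at heq
    obtain ⟨h1, h2⟩ := heq
    have hl : (e 2 : ℤ) ≤ p.2 := zle hb0 hjb h0j (by positivity) h2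
    have hlN : e 2 ≤ p.2 := by exact_mod_cast hl
    have hsp : p.2 = e 2 ∨ p.2 = e 2 + 1 ∨ p.2 = e 2 + 2 := by omega
    rcases hsp with hs | hs | hs <;> rw [hs] at h1 h2 <;> push_cast at h1 h2 <;>
      ring_nf at h1 h2 <;> omega
  · simp only [Finsupp.add_apply, Finsupp.single_apply, Prod.mk.injEq] at heq
    norm_num at heq
    obtain ⟨h1, h2⟩ := heq
    have hl : (e 2 : ℤ) + 2 ≤ p.2 := zle hb0 hjb h0j (by positivity) h2
    have hlN : e 2 + 2 ≤ p.2 := by exact_mod_cast hl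
    have hs : p.2 = e 2 + 2 := by omega
    rw [hs] at h1 h2
    push_cast at h1 h2
    ring_nf at h1 h2
    omega

lemma psi_Ee_injOn {a b α β k : ℕ} {p q : ℕ × ℕ}
    (hp : p ∈ JLset a b α β k) (hq : q ∈ JLset a b α β k)
    (h : psi b α (Ee k p) = psi b α (Ee k q)) : p = q := by
  rw [mem_JLset_iff] at hp hq
  rw [psi_Ee, psi_Ee, Prod.mk.injEq] at h
  obtain ⟨h1, h2⟩ := h
  obtain ⟨hp1, hp2, -⟩ := hp
  obtain ⟨hq1, hq2, -⟩ := hq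
  have hb0 : (0:ℤ) ≤ b := by positivity
  have hl1 : (q.2 : ℤ) ≤ p.2 :=
    zle hb0 (by exact_mod_cast hp1) (by positivity) (by positivity) h2
  have hl2 : (p.2 : ℤ) ≤ q.2 :=
    zle hb0 (by exact_mod_cast hq1) (by positivity) (by positivity) h2.symm
  have h22 : p.2 = q.2 := by exact_mod_cast le_antisymm hl2 hl1
  rw [h22] at h2
  have : p.1 = q.1 := by omega
  exact Prod.ext this h22


variable (a b α β k : ℕ)

noncomputable def Igen (K : Type*) [Field K] (a b α β : ℕ) : Ideal (MvPolynomial (Fin 3) K) :=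
  Ideal.span {(X 0 : MvPolynomial (Fin 3) K) ^ a, X 1 ^ b - X 0 ^ α * X 2, X 2 ^ 3,
    X 0 ^ (a - α) * X 1 ^ (b - β), X 1 ^ (b - β) * X 2 ^ 2}

noncomputable def stdVec (K : Type*) [Field K] (a b α β k : ℕ)
    (p : {p : ℕ × ℕ // p ∈ JLset a b α β k}) :
    MvPolynomial (Fin 3) K ⧸ Igen K a b α β :=
  Ideal.Quotient.mk (Igen K a b α β) (monomial (Ee k p.1) 1)

lemma mk_smul_monomial {K : Type*} [Field K] (I : Ideal (MvPolynomial (Fin 3) K))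
    (c : K) (e : Fin 3 →₀ ℕ) :
    c • Ideal.Quotient.mk I (monomial e 1) = Ideal.Quotient.mk I (monomial e c) := by
  have h1 : (monomial e c : MvPolynomial (Fin 3) K) = c • monomial e 1 := by
    rw [smul_monomial, smul_eq_mul, mul_one]
  rw [h1, ← Ideal.Quotient.mkₐ_eq_mk K I, map_smul]

lemma stdVec_indep {K : Type*} [Field K] (hα1 : 1 ≤ α) (hα2 : α ≤ a - 1)
    (hβ1 : 1 ≤ β) (hβ2 : β ≤ b - 1) (hαb : α + 1 = b) :
    LinearIndependent K (stdVec K a b α β k) := by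
  rw [linearIndependent_iff']
  intro s g hsum i0 hi0
  set f : MvPolynomial (Fin 3) K := ∑ i ∈ s, monomial (Ee k i.1) (g i) with hf
  have hfI : f ∈ Igen K a b α β := by
    rw [← Ideal.Quotient.eq_zero_iff_mem]
    have h1 : Ideal.Quotient.mk (Igen K a b α β) f
        = ∑ i ∈ s, g i • stdVec K a b α β k i := by
      rw [hf, map_sum (Ideal.Quotient.mk (Igen K a b α β)) _ _]
      exact Finset.sum_congr rfl fun i _ => (mk_smul_monomial _ _ _).symm
    rw [h1, hsum]
  have hW : phi b α K f ∈ Wmod a b α β K := phi_mem_Wmod a b α β hfI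
  have hcoeff : (phi b α K f).coeff (psi b α (Ee k i0.1)) = 0 :=
    coeff_eq_zero_of_mem_Wmod a b α β hW
      (psi_Ee_not_mem_Tset hα1 hα2 hβ1 hβ2 hαb i0.2)
  have hval : (phi b α K f).coeff (psi b α (Ee k i0.1)) = g i0 := by
    rw [hf, map_sum (phi b α K) _ _]
    rw [AddMonoidAlgebra.coeff_sum, Finsupp.finset_sum_apply]
    rw [Finset.sum_eq_single_of_mem i0 hi0]
    · rw [phi_monomial, AddMonoidAlgebra.coeff_single, Finsupp.single_apply, if_pos rfl]
    · intro j hj hne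
      rw [phi_monomial, AddMonoidAlgebra.coeff_single, Finsupp.single_apply, if_neg]
      intro hps
      exact hne (Subtype.ext (psi_Ee_injOn j.2 i0.2 hps))
  rw [hcoeff] at hval
  exact hval.symm

lemma gen_mem1 {K : Type*} [Field K] : (X 0 : MvPolynomial (Fin 3) K) ^ a ∈ Igen K a b α β :=
  Ideal.subset_span (by left; rfl)
lemma gen_mem2 {K : Type*} [Field K] :
    (X 1 ^ b - X 0 ^ α * X 2 : MvPolynomial (Fin 3) K) ∈ Igen K a b α β :=
  Ideal.subset_span (by right; left; rfl)
lemma gen_mem3 {K : Type*} [Field K] : (X 2 : MvPolynomial (Fin 3) K) ^ 3 ∈ Igen K a b α β :=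
  Ideal.subset_span (by right; right; left; rfl)
lemma gen_mem4 {K : Type*} [Field K] :
    (X 0 ^ (a - α) * X 1 ^ (b - β) : MvPolynomial (Fin 3) K) ∈ Igen K a b α β :=
  Ideal.subset_span (by right; right; right; left; rfl)
lemma gen_mem5 {K : Type*} [Field K] :
    (X 1 ^ (b - β) * X 2 ^ 2 : MvPolynomial (Fin 3) K) ∈ Igen K a b α β :=
  Ideal.subset_span (by right; right; right; right; rfl)

lemma red {K : Type*} [Field K] (hα1 : 1 ≤ α) (hα2 : α ≤ a - 1)
    (hβ1 : 1 ≤ β) (hβ2 : β ≤ b - 1) (hαb : α + 1 = b) :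
    ∀ j i l : ℕ, i + j + l = k →
      Ideal.Quotient.mk (Igen K a b α β) (X 0 ^ i * X 1 ^ j * X 2 ^ l) ∈
        Submodule.span K (Set.range (stdVec K a b α β k)) := by
  intro j
  induction j using Nat.strong_induction_on with
  | _ j IH =>
  intro i l hk
  by_cases hia : a ≤ i
  · obtain ⟨i', rfl⟩ : ∃ i', i = a + i' := ⟨i - a, by omega⟩
    have hX : (X 0 ^ (a + i') * X 1 ^ j * X 2 ^ l : MvPolynomial (Fin 3) K)
        = X 0 ^ a * (X 0 ^ i' * X 1 ^ j * X 2 ^ l) := by ring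
    rw [hX, Ideal.Quotient.eq_zero_iff_mem.mpr
      (Ideal.mul_mem_right _ _ (gen_mem1 a b α β))]
    exact Submodule.zero_mem _
  by_cases hl3 : 3 ≤ l
  · obtain ⟨l', rfl⟩ : ∃ l', l = 3 + l' := ⟨l - 3, by omega⟩
    have hX : (X 0 ^ i * X 1 ^ j * X 2 ^ (3 + l') : MvPolynomial (Fin 3) K)
        = X 2 ^ 3 * (X 0 ^ i * X 1 ^ j * X 2 ^ l') := by ring
    rw [hX, Ideal.Quotient.eq_zero_iff_mem.mpr
      (Ideal.mul_mem_right _ _ (gen_mem3 a b α β))]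
    exact Submodule.zero_mem _
  by_cases hjb : b ≤ j
  · obtain ⟨j', rfl⟩ : ∃ j', j = j' + b := ⟨j - b, by omega⟩
    have hsub : (X 0 ^ i * X 1 ^ (j' + b) * X 2 ^ l : MvPolynomial (Fin 3) K)
        - X 0 ^ (i + α) * X 1 ^ j' * X 2 ^ (l + 1)
        = (X 1 ^ b - X 0 ^ α * X 2) * (X 0 ^ i * X 1 ^ j' * X 2 ^ l) := by ring
    have hmk : Ideal.Quotient.mk (Igen K a b α β) (X 0 ^ i * X 1 ^ (j' + b) * X 2 ^ l)
        = Ideal.Quotient.mk (Igen K a b α β) (X 0 ^ (i + α) * X 1 ^ j' * X 2 ^ (l + 1)) := by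
      rw [Ideal.Quotient.mk_eq_mk_iff_sub_mem, hsub]
      exact Ideal.mul_mem_right _ _ (gen_mem2 a b α β)
    rw [hmk]
    exact IH j' (by omega) (i + α) (l + 1) (by omega)
  by_cases hbad1 : a - α ≤ i ∧ b - β ≤ j
  · obtain ⟨i', rfl⟩ : ∃ i', i = (a - α) + i' := ⟨i - (a - α), by omega⟩
    obtain ⟨j', rfl⟩ : ∃ j', j = (b - β) + j' := ⟨j - (b - β), by omega⟩
    have hX : (X 0 ^ ((a - α) + i') * X 1 ^ ((b - β) + j') * X 2 ^ l : MvPolynomial (Fin 3) K)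
        = (X 0 ^ (a - α) * X 1 ^ (b - β)) * (X 0 ^ i' * X 1 ^ j' * X 2 ^ l) := by ring
    rw [hX, Ideal.Quotient.eq_zero_iff_mem.mpr
      (Ideal.mul_mem_right _ _ (gen_mem4 a b α β))]
    exact Submodule.zero_mem _
  by_cases hbad2 : b - β ≤ j ∧ 2 ≤ l
  · obtain ⟨j', rfl⟩ : ∃ j', j = (b - β) + j' := ⟨j - (b - β), by omega⟩
    obtain ⟨l', rfl⟩ : ∃ l', l = 2 + l' := ⟨l - 2, by omega⟩
    have hX : (X 0 ^ i * X 1 ^ ((b - β) + j') * X 2 ^ (2 + l') : MvPolynomial (Fin 3) K)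
        = (X 1 ^ (b - β) * X 2 ^ 2) * (X 0 ^ i * X 1 ^ j' * X 2 ^ l') := by ring
    rw [hX, Ideal.Quotient.eq_zero_iff_mem.mpr
      (Ideal.mul_mem_right _ _ (gen_mem5 a b α β))]
    exact Submodule.zero_mem _
  · -- standard monomial
    have hmem : (j, l) ∈ JLset a b α β k := by
      rw [mem_JLset_iff]
      refine ⟨by omega, by omega, ?_, ?_, ?_, ?_⟩ <;> simp only [] <;> omega
    refine Submodule.subset_span ⟨⟨(j, l), hmem⟩, ?_⟩
    rw [stdVec]
    have hE : Ee k (j, l) = Finsupp.single 0 i + Finsupp.single 1 j + Finsupp.single 2 l := by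
      rw [Ee]
      congr 1
      · congr 1
        · congr 1
          omega
    rw [hE, monXXX]

lemma degree_fin3 (d : Fin 3 →₀ ℕ) : d.degree = d 0 + d 1 + d 2 := by
  rw [Finsupp.degree_apply, Finset.sum_subset (Finset.subset_univ d.support)
    (fun i _ hi => Finsupp.notMem_support_iff.mp hi), Fin.sum_univ_three]

lemma e_eta (e : Fin 3 →₀ ℕ) :
    e = Finsupp.single 0 (e 0) + Finsupp.single 1 (e 1) + Finsupp.single 2 (e 2) := by
  ext i
  fin_cases i <;> simp [Finsupp.single_apply]

lemma gr_eq {K : Type*} [Field K] (hα1 : 1 ≤ α) (hα2 : α ≤ a - 1)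
    (hβ1 : 1 ≤ β) (hβ2 : β ≤ b - 1) (hαb : α + 1 = b) :
    grComponent K (Igen K a b α β) k = Submodule.span K (Set.range (stdVec K a b α β k)) := by
  apply le_antisymm
  · rintro x hx
    obtain ⟨f, hf, rfl⟩ := Submodule.mem_map.mp hx
    rw [mem_homogeneousSubmodule] at hf
    have hmk : (Ideal.Quotient.mkₐ K (Igen K a b α β)).toLinearMap f
        = ∑ d ∈ f.support, (coeff d f) • Ideal.Quotient.mk (Igen K a b α β) (monomial d 1) := by
      have h1 : f = ∑ d ∈ f.support, monomial d (coeff d f) :=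
        (support_sum_monomial_coeff f).symm
      conv_lhs => rw [h1]
      rw [AlgHom.toLinearMap_apply, Ideal.Quotient.mkₐ_eq_mk,
        map_sum (Ideal.Quotient.mk (Igen K a b α β)) _ _]
      exact Finset.sum_congr rfl fun d _ => (mk_smul_monomial _ _ _).symm
    rw [hmk]
    apply Submodule.sum_mem
    intro d hd
    apply Submodule.smul_mem
    have hdeg : d 0 + d 1 + d 2 = k := by
      have h := hf (MvPolynomial.mem_support_iff.mp hd)
      rw [← degree_fin3, Finsupp.degree_eq_weight_one]
      exact h
    have : (monomial d (1:K)) = X 0 ^ (d 0) * X 1 ^ (d 1) * X 2 ^ (d 2) := by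
      conv_lhs => rw [e_eta d]
      exact monXXX _ _ _
    rw [this]
    exact red a b α β k hα1 hα2 hβ1 hβ2 hαb (d 1) (d 0) (d 2) hdeg
  · rw [Submodule.span_le]
    rintro x ⟨p, rfl⟩
    refine ⟨monomial (Ee k p.1) 1, ?_, ?_⟩
    · rw [SetLike.mem_coe, mem_homogeneousSubmodule]
      apply isHomogeneous_monomial
      have hp := mem_JLset_iff.mp p.2
      rw [Ee, degree_fin3]
      have := hp.2.2.1
      simp [Finsupp.add_apply, Finsupp.single_apply]
      omega
    · rw [AlgHom.toLinearMap_apply, Ideal.Quotient.mkₐ_eq_mk, stdVec]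

lemma hilb_eq {K : Type*} [Field K] (hα1 : 1 ≤ α) (hα2 : α ≤ a - 1)
    (hβ1 : 1 ≤ β) (hβ2 : β ≤ b - 1) (hαb : α + 1 = b) :
    hilb K (Igen K a b α β) k = (JLset a b α β k).card := by
  rw [hilb, gr_eq a b α β k hα1 hα2 hβ1 hβ2 hαb,
    finrank_span_eq_card (stdVec_indep a b α β k hα1 hα2 hβ1 hβ2 hαb),
    Fintype.card_coe]

def Sl (a b α β k l : ℕ) : Finset ℕ := (range b).filter (fun j => Qc a b α β k j l)

lemma fiber_card (l : ℕ) (hl : l < 3) :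
    ((JLset a b α β k).filter (fun p => p.2 = l)).card = (Sl a b α β k l).card := by
  have himg : ((JLset a b α β k).filter (fun p => p.2 = l)).image Prod.fst
      = Sl a b α β k l := by
    ext j
    simp only [Finset.mem_image, Finset.mem_filter, Sl, Finset.mem_range, JLset,
      Finset.mem_product]
    constructor
    · rintro ⟨p, ⟨⟨⟨h1, h2⟩, h3⟩, h4⟩, rfl⟩
      rw [← h4]
      exact ⟨h1, h3⟩
    · rintro ⟨h1, h2⟩
      exact ⟨(j, l), ⟨⟨⟨h1, by simpa using hl⟩, h2⟩, rfl⟩, rfl⟩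
  rw [← himg]
  rw [Finset.card_image_of_injOn]
  intro p hp q hq hpq
  simp only [Finset.coe_filter, Set.mem_setOf_eq] at hp hq
  exact Prod.ext hpq (hp.2.trans hq.2.symm)

lemma JL_card : (JLset a b α β k).card
    = (Sl a b α β k 0).card + (Sl a b α β k 1).card + (Sl a b α β k 2).card := by
  rw [Finset.card_eq_sum_card_fiberwise (f := Prod.snd) (t := range 3)
    (fun p hp => by simp only [Finset.mem_coe, Finset.mem_range]; exact (mem_JLset_iff.mp hp).2.1)]
  rw [Finset.sum_range_succ, Finset.sum_range_succ, Finset.sum_range_one]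
  rw [fiber_card a b α β k 0 (by norm_num), fiber_card a b α β k 1 (by norm_num),
    fiber_card a b α β k 2 (by norm_num)]

end Stmt13


open Stmt13 in
theorem stmt_13 (K : Type*) [Field K] [CharZero K] (a b α β : ℕ)
    (hα1 : 1 ≤ α) (hα2 : α ≤ a - 1)
    (hβ1 : 1 ≤ β) (hβ2 : β ≤ b - 1)
    (hαb : α + 1 = b) :
    let I : Ideal (MvPolynomial (Fin 3) K) := Ideal.span
      {(X 0 : MvPolynomial (Fin 3) K) ^ a, X 1 ^ b - X 0 ^ α * X 2, X 2 ^ 3,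
        X 0 ^ (a - α) * X 1 ^ (b - β), X 1 ^ (b - β) * X 2 ^ 2}
    let k : ℕ := (a + b - β) / 2
    ((a = b ∧ β = 1 → (hilb K I k : ℤ) = 3 * b - 3) ∧
     ((β : ℤ) ≤ (a : ℤ) - b → (hilb K I k : ℤ) = 3 * b - β) ∧
     ((β : ℤ) = (a : ℤ) - b + 1 ∧ 2 ≤ β → (hilb K I k : ℤ) = 3 * b - β - 1) ∧
     ((a : ℤ) - b + 2 ≤ (β : ℤ) → (hilb K I k : ℤ) = 2 * a + b - 3 * β + 2)) := by
  intro I k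
  have hI : I = Igen K a b α β := rfl
  have hk : k = (a + b - β) / 2 := rfl
  have hcard : hilb K I k = (JLset a b α β k).card := by
    rw [hI]; exact hilb_eq a b α β k hα1 hα2 hβ1 hβ2 hαb
  rw [hcard]
  rw [JL_card]
  have hsl : ∀ l N, (∀ j, (j < b ∧ Qc a b α β k j l) ↔ j < N) → Sl a b α β k l = range N := by
    intro l N h
    ext j
    simp only [Sl, Finset.mem_filter, Finset.mem_range]
    exact h j
  refine ⟨?_, ?_, ?_, ?_⟩
  · rintro ⟨hab, hb1⟩
    rw [hsl 0 b (fun j => by simp [Qc]; omega), hsl 1 (b-1) (fun j => by simp [Qc]; omega),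
      hsl 2 (b-2) (fun j => by simp [Qc]; omega)]
    simp only [Finset.card_range]
    omega
  · intro hc
    rw [hsl 0 b (fun j => by simp [Qc]; omega), hsl 1 b (fun j => by simp [Qc]; omega),
      hsl 2 (b-β) (fun j => by simp [Qc]; omega)]
    simp only [Finset.card_range]
    omega
  · rintro ⟨hc, hb2⟩
    rw [hsl 0 b (fun j => by simp [Qc]; omega), hsl 1 (b-1) (fun j => by simp [Qc]; omega),
      hsl 2 (b-β) (fun j => by simp [Qc]; omega)]
    simp only [Finset.card_range]
    omega
  · intro hc
    have h0 : Sl a b α β k 0 = Finset.Icc 0 k \ Finset.Icc (b-β) (k+b-1-a) := by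
      ext j
      simp only [Sl, Finset.mem_filter, Finset.mem_range, Finset.mem_sdiff,
        Finset.mem_Icc]
      unfold Qc
      omega
    have h1 : Sl a b α β k 1 = Finset.Icc 0 (k-1) \ Finset.Icc (b-β) (k+b-2-a) := by
      ext j
      simp only [Sl, Finset.mem_filter, Finset.mem_range, Finset.mem_sdiff,
        Finset.mem_Icc]
      unfold Qc
      omega
    have h2 : Sl a b α β k 2 = Finset.Icc 0 (min (b-β-1) (k-2)) := by
      ext j
      simp only [Sl, Finset.mem_filter, Finset.mem_range, Finset.mem_Icc]
      unfold Qc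
      omega
    rw [h0, h1, h2,
      Finset.card_sdiff_of_subset (Finset.Icc_subset_Icc (Nat.zero_le _) (by omega)),
      Finset.card_sdiff_of_subset (Finset.Icc_subset_Icc (Nat.zero_le _) (by omega)),
      Nat.card_Icc, Nat.card_Icc, Nat.card_Icc, Nat.card_Icc, Nat.card_Icc]
    omega
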